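/- arXiv:1707.04235 — 3 statements merged into one kernel-verified Lean document; each statement's English description precedes it below -/
import Mathlib

section
/- For the harmonic oscillator Ornstein–Uhlenbeck process, the conditional covariance ∫_0^Δ e^{sM} C Cᵀ e^{sMᵀ} ds equals σ² [[Δ³/3, Δ²/2 − γΔ³/2],[Δ²/2 − γΔ³/2, Δ − γΔ² + (2γ²−D)Δ³/3]] + O(Δ⁴) as Δ → 0. -/
set_option maxHeartbeats 2000000

open Matrix NormedSpace Finset Nat intervalIntegral MeasureTheory

section Aux

attribute [local instance] Matrix.linftyOpSemiNormedRing Matrix.linftyOpNormedRing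
  Matrix.linftyOpNormedAlgebra

lemma exp_taylor2' {A' : Type*} [NormedRing A'] [NormedAlgebra ℝ A'] [CompleteSpace A'] (A : A') :
    ‖exp A - (1 + A + (2⁻¹ : ℝ) • (A * A))‖ ≤ ‖A‖ ^ 3 * Real.exp ‖A‖ := by
  have h := NormedSpace.exp_series_hasSum_exp' (𝕂 := ℝ) A
  have h3 : HasSum (fun n : ℕ => (((n + 3)! : ℝ)⁻¹ • A ^ (n + 3)))
      (exp A - ∑ i ∈ range 3, ((i ! : ℝ)⁻¹ • A ^ i)) :=
    (hasSum_nat_add_iff' 3).mpr h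
  have hsum3 : ∑ i ∈ range 3, ((i ! : ℝ)⁻¹ • A ^ i) = 1 + A + (2⁻¹ : ℝ) • (A * A) := by
    simp [Finset.sum_range_succ, Nat.factorial, pow_succ]
  rw [hsum3] at h3
  have hsummable : Summable fun n : ℕ => ‖((n + 3)! : ℝ)⁻¹ • A ^ (n + 3)‖ :=
    (summable_nat_add_iff 3).mpr (NormedSpace.norm_expSeries_summable' (𝕂 := ℝ) A)
  have hbound : ∀ n : ℕ, ‖((n + 3)! : ℝ)⁻¹ • A ^ (n + 3)‖ ≤ ‖A‖ ^ 3 * (‖A‖ ^ n / n !) := by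
    intro n
    rw [norm_smul, Real.norm_eq_abs, abs_of_nonneg (by positivity)]
    have h1 : ‖A ^ (n + 3)‖ ≤ ‖A‖ ^ (n + 3) := norm_pow_le' A (by omega)
    have h2 : ((n + 3)! : ℝ)⁻¹ ≤ ((n)! : ℝ)⁻¹ := by
      apply inv_anti₀ (by positivity)
      exact_mod_cast Nat.factorial_le (by omega)
    calc ((n + 3)! : ℝ)⁻¹ * ‖A ^ (n + 3)‖ ≤ ((n)! : ℝ)⁻¹ * ‖A‖ ^ (n + 3) := by
          apply mul_le_mul h2 h1 (norm_nonneg _) (by positivity)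
      _ = ‖A‖ ^ 3 * (‖A‖ ^ n / n !) := by rw [pow_add]; ring
  have hsummable' : Summable fun n : ℕ => ‖A‖ ^ 3 * (‖A‖ ^ n / n !) :=
    (Real.summable_pow_div_factorial ‖A‖).mul_left _
  calc ‖exp A - (1 + A + (2⁻¹ : ℝ) • (A * A))‖ = ‖∑' n : ℕ, ((n + 3)! : ℝ)⁻¹ • A ^ (n + 3)‖ := by
        rw [h3.tsum_eq]
    _ ≤ ∑' n : ℕ, ‖((n + 3)! : ℝ)⁻¹ • A ^ (n + 3)‖ := norm_tsum_le_tsum_norm hsummable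
    _ ≤ ∑' n : ℕ, ‖A‖ ^ 3 * (‖A‖ ^ n / n !) := Summable.tsum_le_tsum hbound hsummable hsummable'
    _ = ‖A‖ ^ 3 * ∑' n : ℕ, (‖A‖ ^ n / n !) := tsum_mul_left
    _ = ‖A‖ ^ 3 * Real.exp ‖A‖ := by
        rw [Real.exp_eq_exp_ℝ, NormedSpace.exp_eq_tsum_div]

lemma entry_le_linfty (A : Matrix (Fin 2) (Fin 2) ℝ) (i j : Fin 2) : |A i j| ≤ ‖A‖ := by
  rw [Matrix.linfty_opNorm_def]
  calc |A i j| ≤ ((∑ j' : Fin 2, ‖A i j'‖₊ : NNReal) : ℝ) := by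
        push_cast
        exact Finset.single_le_sum (f := fun j' => |A i j'|)
          (fun _ _ => abs_nonneg _) (Finset.mem_univ j)
    _ ≤ _ := by
        exact_mod_cast (Finset.le_sup (Finset.mem_univ i) :
          _ ≤ Finset.univ.sup fun i : Fin 2 => ∑ j' : Fin 2, ‖A i j'‖₊)

lemma norm_one_le_linfty : ‖(1 : Matrix (Fin 2) (Fin 2) ℝ)‖ ≤ 1 := by
  rw [Matrix.linfty_opNorm_def]
  norm_num [Finset.sup_le_iff, Fin.sum_univ_two, Matrix.one_apply]

end Aux

lemma abs_cubic_quartic (a b s : ℝ) (hs0 : 0 ≤ s) (hs1 : s ≤ 1) :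
    |a * s ^ 3 + b * s ^ 4| ≤ (|a| + |b|) * s ^ 3 := by
  have h3 : (0:ℝ) ≤ s ^ 3 := pow_nonneg hs0 3
  have h4' : (0:ℝ) ≤ s ^ 4 := pow_nonneg hs0 4
  have h4 : s ^ 4 ≤ s ^ 3 := by
    calc s ^ 4 = s ^ 3 * s := by ring
      _ ≤ s ^ 3 * 1 := mul_le_mul_of_nonneg_left hs1 h3
      _ = s ^ 3 := by ring
  calc |a * s ^ 3 + b * s ^ 4| ≤ |a * s ^ 3| + |b * s ^ 4| := abs_add_le _ _
    _ = |a| * s ^ 3 + |b| * s ^ 4 := by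
        rw [abs_mul, abs_mul, abs_of_nonneg h3, abs_of_nonneg h4']
    _ ≤ |a| * s ^ 3 + |b| * s ^ 3 := by
        have := mul_le_mul_of_nonneg_left h4 (abs_nonneg b); linarith
    _ = (|a| + |b|) * s ^ 3 := by ring

/-- the common polynomial-error constant -/
noncomputable def cpoly (D γ σ : ℝ) : ℝ :=
  σ^2*γ + σ^2*(γ^2/4) + σ^2*(|2*γ^2 - D|/2) + σ^2*(γ*|γ^2 - D|/4)
    + σ^2*(γ*|γ^2 - D|) + σ^2*((γ^2-D)^2/4)

lemma cpoly_nonneg (D γ σ : ℝ) (hγ : 0 < γ) : 0 ≤ cpoly D γ σ := by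
  unfold cpoly; positivity

lemma cpoly_bounds (D γ σ s : ℝ) (hγ : 0 < γ) (hs0 : 0 ≤ s) (hs1 : s ≤ 1) :
    (|σ^2 * (s - γ*s^2/2) * (s - γ*s^2/2) - (0 + 0*s + σ^2*s^2)| ≤ cpoly D γ σ * s^3) ∧
    (|σ^2 * (s - γ*s^2/2) * (1 - γ*s + (γ^2-D)*s^2/2) - (0 + σ^2*s + (-(3/2*σ^2*γ))*s^2)|
        ≤ cpoly D γ σ * s^3) ∧
    (|σ^2 * (1 - γ*s + (γ^2-D)*s^2/2) * (s - γ*s^2/2) - (0 + σ^2*s + (-(3/2*σ^2*γ))*s^2)|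
        ≤ cpoly D γ σ * s^3) ∧
    (|σ^2 * (1 - γ*s + (γ^2-D)*s^2/2) * (1 - γ*s + (γ^2-D)*s^2/2)
        - (σ^2 + (-(2*σ^2*γ))*s + (σ^2*(2*γ^2-D))*s^2)| ≤ cpoly D γ σ * s^3) := by
  have h0 : (0:ℝ) ≤ σ^2 := by positivity
  have h3 : (0:ℝ) ≤ s^3 := pow_nonneg hs0 3
  have n1 : (0:ℝ) ≤ σ^2*γ := by positivity
  have n2 : (0:ℝ) ≤ σ^2*(γ^2/4) := by positivity
  have n3 : (0:ℝ) ≤ σ^2*(|2*γ^2 - D|/2) := by positivity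
  have n4 : (0:ℝ) ≤ σ^2*(γ*|γ^2 - D|/4) := by positivity
  have n5 : (0:ℝ) ≤ σ^2*(γ*|γ^2 - D|) := by positivity
  have n6 : (0:ℝ) ≤ σ^2*((γ^2-D)^2/4) := by positivity
  have key : ∀ a b : ℝ, |a| + |b| ≤ cpoly D γ σ →
      ∀ x : ℝ, x = a * s^3 + b * s^4 → |x| ≤ cpoly D γ σ * s^3 := by
    intro a b hab x hx
    rw [hx]
    exact (abs_cubic_quartic a b s hs0 hs1).trans (mul_le_mul_of_nonneg_right hab h3)
  have e1 : |σ^2*((2*γ^2 - D)/2)| = σ^2*(|2*γ^2 - D|/2) := by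
    rw [abs_mul, abs_div, abs_of_nonneg h0]; norm_num
  have e2 : |σ^2*(γ*(γ^2-D)/4)| = σ^2*(γ*|γ^2 - D|/4) := by
    rw [abs_mul, abs_div, abs_mul, abs_of_nonneg h0, abs_of_nonneg hγ.le]; norm_num
  have e3 : |σ^2*(γ*(γ^2-D))| = σ^2*(γ*|γ^2 - D|) := by
    rw [abs_mul, abs_mul, abs_of_nonneg h0, abs_of_nonneg hγ.le]
  refine ⟨?_, ?_, ?_, ?_⟩
  · refine key (-(σ^2*γ)) (σ^2*(γ^2/4)) ?_ _ (by ring)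
    rw [abs_neg, abs_of_nonneg n1, abs_of_nonneg n2]
    unfold cpoly; linarith
  · refine key (σ^2*((2*γ^2 - D)/2)) (-(σ^2*(γ*(γ^2-D)/4))) ?_ _ (by ring)
    rw [abs_neg, e1, e2]
    unfold cpoly; linarith
  · refine key (σ^2*((2*γ^2 - D)/2)) (-(σ^2*(γ*(γ^2-D)/4))) ?_ _ (by ring)
    rw [abs_neg, e1, e2]
    unfold cpoly; linarith
  · refine key (-(σ^2*(γ*(γ^2-D)))) (σ^2*((γ^2-D)^2/4)) ?_ _ (by ring)
    rw [abs_neg, e3, abs_of_nonneg n6]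
    unfold cpoly; linarith

/-- helper: integral comparison against a quadratic with cubic error. -/
lemma main_aux (f : ℝ → ℝ) (a b c' c₀ Δ : ℝ) (hΔ0 : 0 < Δ) (hΔ1 : Δ ≤ 1)
    (hf : Continuous f) (hc₀ : 0 ≤ c₀)
    (key : ∀ s, 0 ≤ s → s ≤ 1 → |f s - (a + b * s + c' * s ^ 2)| ≤ c₀ * s ^ 3) :
    |(∫ s in (0:ℝ)..Δ, f s) - (a * Δ + b * Δ ^ 2 / 2 + c' * Δ ^ 3 / 3)| ≤ c₀ * Δ ^ 4 := by
  have hpc : Continuous fun s : ℝ => a + b * s + c' * s ^ 2 := by fun_prop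
  have hpint : IntervalIntegrable (fun s : ℝ => a + b * s + c' * s ^ 2) volume 0 Δ :=
    hpc.intervalIntegrable 0 Δ
  have hfint := hf.intervalIntegrable (μ := volume) 0 Δ
  have hpoly : ∫ s in (0:ℝ)..Δ, (a + b * s + c' * s ^ 2)
      = a * Δ + b * Δ ^ 2 / 2 + c' * Δ ^ 3 / 3 := by
    have h3 : IntervalIntegrable (fun _ : ℝ => a) volume 0 Δ := intervalIntegrable_const
    have h4 : IntervalIntegrable (fun s : ℝ => b * s) volume 0 Δ :=
      (by fun_prop : Continuous fun s : ℝ => b * s).intervalIntegrable 0 Δ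
    rw [intervalIntegral.integral_add
        ((by fun_prop : Continuous fun s : ℝ => a + b * s).intervalIntegrable 0 Δ)
        ((by fun_prop : Continuous fun s : ℝ => c' * s ^ 2).intervalIntegrable 0 Δ),
      intervalIntegral.integral_add h3 h4,
      intervalIntegral.integral_const, intervalIntegral.integral_const_mul,
      intervalIntegral.integral_const_mul, integral_pow, integral_id]
    simp [smul_eq_mul]; ring
  rw [← hpoly, ← intervalIntegral.integral_sub hfint hpint]
  calc |∫ s in (0:ℝ)..Δ, (f s - (a + b * s + c' * s ^ 2))|
      ≤ ∫ s in (0:ℝ)..Δ, |f s - (a + b * s + c' * s ^ 2)| :=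
        intervalIntegral.abs_integral_le_integral_abs hΔ0.le
    _ ≤ ∫ s in (0:ℝ)..Δ, c₀ * s ^ 3 := by
        apply intervalIntegral.integral_mono_on hΔ0.le ((hfint.sub hpint).abs)
          ((by fun_prop : Continuous fun s : ℝ => c₀ * s ^ 3).intervalIntegrable 0 Δ)
        intro s hs
        exact key s hs.1 (hs.2.trans hΔ1)
    _ = c₀ * (Δ ^ 4 / 4) := by
        rw [intervalIntegral.integral_const_mul, integral_pow]; norm_num
    _ ≤ c₀ * Δ ^ 4 := by nlinarith [pow_nonneg hΔ0.le 4]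

/-- For the harmonic oscillator OU process, the conditional covariance
`∫₀^Δ e^{sM} CCᵀ e^{sMᵀ} ds` equals, entrywise up to `O(Δ⁴)`,
`σ² [[Δ³/3, Δ²/2 − γΔ³/2],[Δ²/2 − γΔ³/2, Δ − γΔ² + (2γ²−D)Δ³/3]]`. -/
theorem stmt_6 (D γ σ : ℝ) (hD : 0 < D) (hγ : 0 < γ) (hσ : 0 < σ)
    (M : Matrix (Fin 2) (Fin 2) ℝ) (hM : M = !![0, 1; -D, -γ])
    (C : Matrix (Fin 2) (Fin 1) ℝ) (hC : C = !![0; σ]) :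
    ∃ c > 0, ∃ δ > 0, ∀ Δ : ℝ, 0 < Δ → Δ < δ → ∀ i j : Fin 2,
      |(∫ s in (0:ℝ)..Δ,
          ((NormedSpace.exp (s • M)) * (C * Cᵀ) * (NormedSpace.exp (s • Mᵀ))) i j) -
        (σ ^ 2 • !![Δ ^ 3 / 3, Δ ^ 2 / 2 - γ * Δ ^ 3 / 2;
          Δ ^ 2 / 2 - γ * Δ ^ 3 / 2,
          Δ - γ * Δ ^ 2 + (2 * γ ^ 2 - D) * Δ ^ 3 / 3] : Matrix (Fin 2) (Fin 2) ℝ) i j|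
        ≤ c * Δ ^ 4 := by
  letI : SeminormedRing (Matrix (Fin 2) (Fin 2) ℝ) := Matrix.linftyOpSemiNormedRing
  letI : NormedRing (Matrix (Fin 2) (Fin 2) ℝ) := Matrix.linftyOpNormedRing
  letI : NormedAlgebra ℝ (Matrix (Fin 2) (Fin 2) ℝ) := Matrix.linftyOpNormedAlgebra
  subst hM hC
  set Mm : Matrix (Fin 2) (Fin 2) ℝ := !![0, 1; -D, -γ] with hMm
  set B : Matrix (Fin 2) (Fin 2) ℝ := !![(0:ℝ); σ] * !![(0:ℝ); σ]ᵀ with hB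
  set K : ℝ := ‖Mm‖ + ‖Mmᵀ‖ + 1 with hK
  set cR : ℝ := K ^ 3 * Real.exp K with hcR
  set LP : ℝ := 1 + K + K ^ 2 with hLP
  set ccross : ℝ := cR * (‖B‖ * (LP + cR)) + LP * (‖B‖ * cR) with hccross
  have hK0 : (0:ℝ) ≤ K := by rw [hK]; positivity
  have hcR0 : (0:ℝ) ≤ cR := by rw [hcR]; positivity
  have hLP0 : (0:ℝ) ≤ LP := by rw [hLP]; positivity
  have hcc0 : (0:ℝ) ≤ ccross := by
    rw [hccross]
    exact add_nonneg
      (mul_nonneg hcR0 (mul_nonneg (norm_nonneg B) (add_nonneg hLP0 hcR0)))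
      (mul_nonneg hLP0 (mul_nonneg (norm_nonneg B) hcR0))
  have hcp0 : (0:ℝ) ≤ cpoly D γ σ := cpoly_nonneg D γ σ hγ
  refine ⟨ccross + cpoly D γ σ + 1, by linarith, 1, one_pos, ?_⟩
  intro Δ hΔ0 hΔ1 i j
  -- notation for the Taylor polynomial coordinates
  set u : ℝ → Fin 2 → ℝ :=
    fun s => ![s - γ*s^2/2, 1 - γ*s + (γ^2-D)*s^2/2] with hu
  -- the pointwise cross estimate
  have hcross : ∀ s : ℝ, 0 ≤ s → s ≤ 1 → ∀ i' j' : Fin 2,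
      |(NormedSpace.exp (s • Mm) * B * NormedSpace.exp (s • Mmᵀ)) i' j'
        - σ^2 * u s i' * u s j'| ≤ ccross * s^3 := by
    intro s hs0 hs1 i' j'
    have hs3 : (0:ℝ) ≤ s^3 := pow_nonneg hs0 3
    have hs31 : s^3 ≤ 1 := pow_le_one₀ hs0 hs1
    set E : Matrix (Fin 2) (Fin 2) ℝ := NormedSpace.exp (s • Mm) with hE
    set E' : Matrix (Fin 2) (Fin 2) ℝ := NormedSpace.exp (s • Mmᵀ) with hE'
    set P : Matrix (Fin 2) (Fin 2) ℝ := 1 + s•Mm + (2⁻¹:ℝ)•((s•Mm)*(s•Mm)) with hPdef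
    set P' : Matrix (Fin 2) (Fin 2) ℝ := 1 + s•Mmᵀ + (2⁻¹:ℝ)•((s•Mmᵀ)*(s•Mmᵀ)) with hP'def
    have hMK : ‖Mm‖ ≤ K := by rw [hK]; linarith [norm_nonneg Mmᵀ]
    have hMTK : ‖Mmᵀ‖ ≤ K := by rw [hK]; linarith [norm_nonneg Mm]
    have hnorm_bound : ∀ (N : Matrix (Fin 2) (Fin 2) ℝ), ‖N‖ ≤ K →
        ‖NormedSpace.exp (s • N) - (1 + s•N + (2⁻¹:ℝ)•((s•N)*(s•N)))‖ ≤ cR * s^3 := by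
      intro N hNK
      have hsN : ‖s•N‖ = s*‖N‖ := by rw [norm_smul, Real.norm_eq_abs, abs_of_nonneg hs0]
      have a1 : s*‖N‖ ≤ s*K := mul_le_mul_of_nonneg_left hNK hs0
      have a2 : s*‖N‖ ≤ K := by
        calc s*‖N‖ ≤ 1*‖N‖ := mul_le_mul_of_nonneg_right hs1 (norm_nonneg _)
          _ = ‖N‖ := by ring
          _ ≤ K := hNK
      calc ‖NormedSpace.exp (s • N) - (1 + s•N + (2⁻¹:ℝ)•((s•N)*(s•N)))‖
          ≤ ‖s•N‖^3 * Real.exp ‖s•N‖ := exp_taylor2' (s•N)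
        _ ≤ (s*K)^3 * Real.exp K := by
            rw [hsN]
            apply mul_le_mul (pow_le_pow_left₀ (by positivity) a1 3)
              (Real.exp_le_exp.mpr a2) (Real.exp_pos _).le (by positivity)
        _ = cR * s^3 := by rw [hcR]; ring
    have hRE : ‖E - P‖ ≤ cR * s^3 := hnorm_bound Mm hMK
    have hRE' : ‖E' - P'‖ ≤ cR * s^3 := hnorm_bound Mmᵀ hMTK
    have hPbound : ∀ (N : Matrix (Fin 2) (Fin 2) ℝ), ‖N‖ ≤ K →
        ‖(1 : Matrix (Fin 2) (Fin 2) ℝ) + s•N + (2⁻¹:ℝ)•((s•N)*(s•N))‖ ≤ LP := by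
      intro N hNK
      have hsN : ‖s•N‖ ≤ K := by
        rw [norm_smul, Real.norm_eq_abs, abs_of_nonneg hs0]
        calc s*‖N‖ ≤ 1*‖N‖ := mul_le_mul_of_nonneg_right hs1 (norm_nonneg _)
          _ = ‖N‖ := by ring
          _ ≤ K := hNK
      have h1 := norm_one_le_linfty
      have h2 : ‖(2⁻¹:ℝ)•((s•N)*(s•N))‖ = 2⁻¹*‖(s•N)*(s•N)‖ := by
        rw [norm_smul, Real.norm_eq_abs]; norm_num
      have h4 : ‖(s•N)*(s•N)‖ ≤ ‖s•N‖*‖s•N‖ := norm_mul_le _ _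
      calc ‖(1 : Matrix (Fin 2) (Fin 2) ℝ) + s•N + (2⁻¹:ℝ)•((s•N)*(s•N))‖
          ≤ ‖(1 : Matrix (Fin 2) (Fin 2) ℝ) + s•N‖ + ‖(2⁻¹:ℝ)•((s•N)*(s•N))‖ := norm_add_le _ _
        _ ≤ (‖(1 : Matrix (Fin 2) (Fin 2) ℝ)‖ + ‖s•N‖) + 2⁻¹*(‖s•N‖*‖s•N‖) := by
            have := norm_add_le (1 : Matrix (Fin 2) (Fin 2) ℝ) (s•N)
            rw [h2]; nlinarith
        _ ≤ LP := by
            rw [hLP]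
            nlinarith [norm_nonneg (s•N)]
    have hPK : ‖P‖ ≤ LP := hPbound Mm hMK
    have hP'K : ‖P'‖ ≤ LP := hPbound Mmᵀ hMTK
    have hE'n : ‖E'‖ ≤ LP + cR := by
      have : E' = P' + (E' - P') := by abel
      calc ‖E'‖ = ‖P' + (E' - P')‖ := by rw [← this]
        _ ≤ ‖P'‖ + ‖E' - P'‖ := norm_add_le _ _
        _ ≤ LP + cR*s^3 := add_le_add hP'K hRE'
        _ ≤ LP + cR := by nlinarith
    have hdec : E*B*E' - P*B*P' = (E - P)*(B*E') + P*(B*(E' - P')) := by noncomm_ring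
    have hnd : ‖E*B*E' - P*B*P'‖ ≤ ccross * s^3 := by
      rw [hdec]
      have t1 : ‖(E-P)*(B*E')‖ ≤ (cR*s^3)*(‖B‖*(LP+cR)) :=
        le_trans (norm_mul_le _ _) (mul_le_mul hRE
          (le_trans (norm_mul_le _ _) (mul_le_mul_of_nonneg_left hE'n (norm_nonneg B)))
          (norm_nonneg _) (mul_nonneg hcR0 hs3))
      have t2 : ‖P*(B*(E'-P'))‖ ≤ LP*(‖B‖*(cR*s^3)) :=
        le_trans (norm_mul_le _ _) (mul_le_mul hPK
          (le_trans (norm_mul_le _ _) (mul_le_mul_of_nonneg_left hRE' (norm_nonneg B)))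
          (norm_nonneg _) hLP0)
      calc ‖(E-P)*(B*E') + P*(B*(E'-P'))‖
          ≤ ‖(E-P)*(B*E')‖ + ‖P*(B*(E'-P'))‖ := norm_add_le _ _
        _ ≤ (cR*s^3)*(‖B‖*(LP+cR)) + LP*(‖B‖*(cR*s^3)) := add_le_add t1 t2
        _ = ccross * s^3 := by rw [hccross]; ring
    have hPBP : P*B*P' = Matrix.of (fun i' j' => σ^2 * u s i' * u s j') := by
      rw [hPdef, hP'def, hB, hMm, hu]
      ext a b
      fin_cases a <;> fin_cases b <;>
        simp [Matrix.mul_apply, Matrix.one_apply, Fin.sum_univ_two, Fin.sum_univ_one,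
          Matrix.transpose_apply, Matrix.vecHead, Matrix.vecTail, Matrix.vecMul, dotProduct] <;> ring
    have hentry : (P*B*P') i' j' = σ^2 * u s i' * u s j' := by rw [hPBP]; rfl
    calc |(E*B*E') i' j' - σ^2 * u s i' * u s j'|
        = |(E*B*E' - P*B*P') i' j'| := by rw [Matrix.sub_apply, hentry]
      _ ≤ ‖E*B*E' - P*B*P'‖ := entry_le_linfty _ _ _
      _ ≤ ccross * s^3 := hnd
  -- continuity of the integrand entries
  have hcont : ∀ i' j' : Fin 2, Continuous fun s : ℝ =>
      (NormedSpace.exp (s • Mm) * B * NormedSpace.exp (s • Mmᵀ)) i' j' := by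
    intro i' j'
    have h1 : Continuous fun s : ℝ => NormedSpace.exp (s • Mm) :=
      (continuous_iff_continuousAt.2 fun x => (NormedSpace.exp_analytic (𝕂 := ℝ) x).continuousAt).comp (continuous_id.smul continuous_const)
    have h2 : Continuous fun s : ℝ => NormedSpace.exp (s • Mmᵀ) :=
      (continuous_iff_continuousAt.2 fun x => (NormedSpace.exp_analytic (𝕂 := ℝ) x).continuousAt).comp (continuous_id.smul continuous_const)
    exact ((h1.matrix_mul continuous_const).matrix_mul h2).matrix_elem i' j'
  -- final assembly, entry by entry
  have hc1 : ccross + cpoly D γ σ ≤ ccross + cpoly D γ σ + 1 := by linarith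
  have hfin : ∀ (a b c' : ℝ),
      (∀ s : ℝ, 0 ≤ s → s ≤ 1 →
        |σ^2 * u s i * u s j - (a + b * s + c' * s ^ 2)| ≤ cpoly D γ σ * s^3) →
      |(∫ s in (0:ℝ)..Δ,
          (NormedSpace.exp (s • Mm) * B * NormedSpace.exp (s • Mmᵀ)) i j) -
        (a * Δ + b * Δ ^ 2 / 2 + c' * Δ ^ 3 / 3)| ≤ (ccross + cpoly D γ σ + 1) * Δ ^ 4 := by
    intro a b c' hpoly
    have key : ∀ s : ℝ, 0 ≤ s → s ≤ 1 →
        |(NormedSpace.exp (s • Mm) * B * NormedSpace.exp (s • Mmᵀ)) i j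
          - (a + b * s + c' * s ^ 2)| ≤ (ccross + cpoly D γ σ) * s ^ 3 := by
      intro s hs0 hs1
      have h1 := hcross s hs0 hs1 i j
      have h2 := hpoly s hs0 hs1
      calc |(NormedSpace.exp (s • Mm) * B * NormedSpace.exp (s • Mmᵀ)) i j
            - (a + b * s + c' * s ^ 2)|
          ≤ |(NormedSpace.exp (s • Mm) * B * NormedSpace.exp (s • Mmᵀ)) i j
              - σ^2 * u s i * u s j|
            + |σ^2 * u s i * u s j - (a + b * s + c' * s ^ 2)| := abs_sub_le _ _ _
        _ ≤ ccross * s^3 + cpoly D γ σ * s^3 := add_le_add h1 h2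
        _ = (ccross + cpoly D γ σ) * s^3 := by ring
    have := main_aux _ a b c' (ccross + cpoly D γ σ) Δ hΔ0 hΔ1.le (hcont i j)
      (by linarith) key
    refine this.trans ?_
    exact mul_le_mul_of_nonneg_right hc1 (by positivity)
  have hupoly := cpoly_bounds D γ σ
  fin_cases i <;> fin_cases j
  · have h := hfin 0 0 (σ^2) (fun s hs0 hs1 => by
      have := (hupoly s hγ hs0 hs1).1
      simpa [hu] using this)
    rw [show (0:ℝ)*Δ + 0*Δ^2/2 + σ^2*Δ^3/3 = σ^2*(Δ^3/3) from by ring] at h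
    simpa using h
  · have h := hfin 0 (σ^2) (-(3/2*σ^2*γ)) (fun s hs0 hs1 => by
      have := (hupoly s hγ hs0 hs1).2.1
      simpa [hu] using this)
    rw [show (0:ℝ)*Δ + σ^2*Δ^2/2 + (-(3/2*σ^2*γ))*Δ^3/3 = σ^2*(Δ^2/2 - γ*Δ^3/2) from by ring] at h
    simpa using h
  · have h := hfin 0 (σ^2) (-(3/2*σ^2*γ)) (fun s hs0 hs1 => by
      have := (hupoly s hγ hs0 hs1).2.2.1
      simpa [hu] using this)
    rw [show (0:ℝ)*Δ + σ^2*Δ^2/2 + (-(3/2*σ^2*γ))*Δ^3/3 = σ^2*(Δ^2/2 - γ*Δ^3/2) from by ring] at h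
    simpa using h
  · have h := hfin (σ^2) (-(2*σ^2*γ)) (σ^2*(2*γ^2-D)) (fun s hs0 hs1 => by
      have := (hupoly s hγ hs0 hs1).2.2.2
      simpa [hu] using this)
    rw [show σ^2*Δ + (-(2*σ^2*γ))*Δ^2/2 + (σ^2*(2*γ^2-D))*Δ^3/3
        = σ^2*(Δ - γ*Δ^2 + (2*γ^2-D)*Δ^3/3) from by ring] at h
    simpa using h
end

section
/- Let (ξ_{n,i})_{i≤n} be a triangular array adapted to filtrations G_{n,i} such that Σᵢ E(ξ_{n,i} | G_{n,i-1}) → 0 in probability and Σᵢ E(ξ_{n,i}² | G_{n,i-1}) → 0 in probability as n → ∞. Then Σᵢ ξ_{n,i} → 0 in probability. -/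
open MeasureTheory Filter Topology ENNReal

section Aux

/-- Product of two L² functions is integrable. -/
lemma integrable_mul₂ {Ω : Type*} [m0 : MeasurableSpace Ω] {P : Measure Ω}
    {f g : Ω → ℝ} (hf : MemLp f 2 P) (hg : MemLp g 2 P) :
    Integrable (fun ω => f ω * g ω) P := by
  have h : MemLp (f • g) 1 P := hg.smul hf
  exact memLp_one_iff_integrable.mp h

/-- Conditional expectation of an L² function is L². -/
lemma memℒp_two_condexp {Ω : Type*} {m m0 : MeasurableSpace Ω} (hm : m ≤ m0) {P : Measure Ω}
    [IsFiniteMeasure P] {f : Ω → ℝ} (hf : MemLp f 2 P) : MemLp (P[f|m]) 2 P := by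
  have hmem : MemLp ((condExpL2 ℝ ℝ hm (hf.toLp f) : Lp ℝ 2 P) : Ω → ℝ) 2 P := Lp.memLp _
  refine hmem.ae_eq ?_
  refine ae_eq_condExp_of_forall_setIntegral_eq hm (hf.integrable one_le_two)
    (fun s _ _ => (hmem.integrable one_le_two).integrableOn)
    (fun s hs hμs => ?_)
    (lpMeas.aestronglyMeasurable _)
  rw [integral_condExpL2_eq hm (hf.toLp f) hs hμs.ne]
  exact setIntegral_congr_ae (hm s hs) ((hf.coeFn_toLp).mono fun ω h _ => h)

variable {Ω : Type*} [m0 : MeasurableSpace Ω] {P : Measure Ω}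

/-- Core estimate (stopped martingale second moment bound + Markov):
for any `a > 0` and `ε > 0`, the probability that the martingale part of the partial
sum is at least `ε` is bounded by `a/ε² + P(∑ E(ξ²|𝒢) > a)`. -/
lemma gcj_core [IsProbabilityMeasure P]
    (𝒢 : ℕ → MeasurableSpace Ω) (hle : ∀ i, 𝒢 i ≤ m0) (hmono : Monotone 𝒢)
    (ξ : ℕ → Ω → ℝ) (hadapt : ∀ i, StronglyMeasurable[𝒢 (i + 1)] (ξ (i + 1)))
    (hL2 : ∀ i, MemLp (ξ i) 2 P) {a ε : ℝ} (ha : 0 < a) (hε : 0 < ε) (n : ℕ) :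
    P {ω | ε ≤ |∑ i ∈ Finset.range n, (ξ (i + 1) ω - (P[ξ (i + 1)|𝒢 i]) ω)|}
      ≤ ENNReal.ofReal (a / ε ^ 2)
        + P {ω | a < ∑ i ∈ Finset.range n, (P[fun ω => ξ (i + 1) ω ^ 2|𝒢 i]) ω} := by
  set g : ℕ → Ω → ℝ := fun i => P[ξ (i + 1)|𝒢 i] with hgdef
  set q : ℕ → Ω → ℝ := fun i => P[fun ω => ξ (i + 1) ω ^ 2|𝒢 i] with hqdef
  set s : ℕ → Set Ω := fun i => {ω | ∑ j ∈ Finset.range (i + 1), q j ω ≤ a} with hsdef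
  set η : ℕ → Ω → ℝ := fun i => ξ (i + 1) - g i with hηdef
  set f : ℕ → Ω → ℝ := fun i => (s i).indicator (η i) with hfdef
  -- basic measurability and integrability facts
  have hgm : ∀ i, StronglyMeasurable[𝒢 i] (g i) := fun i => stronglyMeasurable_condExp
  have hqm : ∀ i, StronglyMeasurable[𝒢 i] (q i) := fun i => stronglyMeasurable_condExp
  have hsmeas : ∀ i, MeasurableSet[𝒢 i] (s i) := by
    intro i
    have hV : Measurable[𝒢 i] (fun ω => ∑ j ∈ Finset.range (i + 1), q j ω) := by
      refine Finset.measurable_sum _ (fun j hj => ?_)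
      have hj' : 𝒢 j ≤ 𝒢 i := hmono (by
        have := Finset.mem_range.mp hj; omega)
      exact ((hqm j).measurable.mono hj' le_rfl)
    exact hV measurableSet_Iic
  have hsmeas0 : ∀ i, MeasurableSet (s i) := fun i => hle i _ (hsmeas i)
  have hξint : ∀ i, Integrable (ξ (i + 1)) P := fun i => (hL2 (i + 1)).integrable one_le_two
  have hξsq : ∀ i, Integrable (fun ω => ξ (i + 1) ω ^ 2) P := fun i => (hL2 (i + 1)).integrable_sq
  have hg2 : ∀ i, MemLp (g i) 2 P := fun i => memℒp_two_condexp (hle i) (hL2 (i + 1))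
  have hη2 : ∀ i, MemLp (η i) 2 P := fun i => (hL2 (i + 1)).sub (hg2 i)
  have hf2 : ∀ i, MemLp (f i) 2 P := fun i => (hη2 i).indicator (hsmeas0 i)
  have hmulint : ∀ i j, Integrable (fun ω => f i ω * f j ω) P :=
    fun i j => integrable_mul₂ (hf2 i) (hf2 j)
  have hq0 : ∀ᵐ ω ∂P, ∀ i, 0 ≤ q i ω := by
    rw [ae_all_iff]
    intro i
    have := condExp_nonneg (μ := P) (m := 𝒢 i)
      (f := fun ω => ξ (i + 1) ω ^ 2) (ae_of_all _ fun ω => sq_nonneg _)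
    filter_upwards [this] with ω hω using hω
  -- strong measurability of f i w.r.t. 𝒢 j for i < j
  have hfm : ∀ i j, i < j → StronglyMeasurable[𝒢 j] (f i) := by
    intro i j hij
    have h1 : 𝒢 (i + 1) ≤ 𝒢 j := hmono (by omega)
    have h2 : 𝒢 i ≤ 𝒢 j := hmono (by omega)
    exact (((hadapt i).mono h1).sub ((hgm i).mono h2)).indicator (h2 _ (hsmeas i))
  -- conditional expectation of η j given 𝒢 j is 0
  have hη0 : ∀ j, P[η j|𝒢 j] =ᵐ[P] 0 := by
    intro j
    have h1 : P[η j|𝒢 j] =ᵐ[P] P[ξ (j + 1)|𝒢 j] - P[g j|𝒢 j] :=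
      condExp_sub (hξint j) integrable_condExp _
    have h2 : P[g j|𝒢 j] = g j :=
      condExp_of_stronglyMeasurable (hle j) stronglyMeasurable_condExp integrable_condExp
    filter_upwards [h1] with ω hω
    simp only [Pi.sub_apply, h2] at hω
    simp [hω, hgdef]
  -- orthogonality of martingale increments
  have horth : ∀ i j, i < j → ∫ ω, f i ω * f j ω ∂P = 0 := by
    intro i j hij
    set F : Ω → ℝ := (s j).indicator (f i) with hFdef
    have hFm : StronglyMeasurable[𝒢 j] F := (hfm i j hij).indicator (hsmeas j)
    have hF2 : MemLp F 2 P := (hf2 i).indicator (hsmeas0 j)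
    have hintmul : Integrable (F * η j) P := by
      have := integrable_mul₂ hF2 (hη2 j)
      simpa [Pi.mul_def] using this
    have hηint : Integrable (η j) P := (hη2 j).integrable one_le_two
    have hpull : P[F * η j|𝒢 j] =ᵐ[P] F * P[η j|𝒢 j] :=
      condExp_mul_of_stronglyMeasurable_left hFm hintmul hηint
    have hzero : ∫ ω, (F * η j) ω ∂P = 0 := by
      rw [← integral_condExp (hle j) (f := F * η j)]
      have : P[F * η j|𝒢 j] =ᵐ[P] 0 := by
        filter_upwards [hpull, hη0 j] with ω h1 h2
        simp only [Pi.mul_apply] at h1 ⊢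
        rw [h1, h2]
        simp
      rw [integral_congr_ae this]
      simp
    have hptw : ∀ ω, f i ω * f j ω = (F * η j) ω := by
      intro ω
      by_cases h : ω ∈ s j
      · simp [hFdef, hfdef, Set.indicator_of_mem h, Pi.mul_apply]
      · simp [hFdef, hfdef, Set.indicator_of_notMem h, Pi.mul_apply]
    rw [show (fun ω => f i ω * f j ω) = fun ω => (F * η j) ω from funext hptw]
    exact hzero
  -- diagonal bound
  have hdiag : ∀ i, ∫ ω, f i ω * f i ω ∂P ≤ ∫ ω, (s i).indicator (q i) ω ∂P := by
    intro i
    have hsm := hsmeas0 i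
    have h1 : ∫ ω, f i ω * f i ω ∂P = ∫ ω in s i, η i ω * η i ω ∂P := by
      rw [← integral_indicator hsm]
      refine integral_congr_ae (ae_of_all _ fun ω => ?_)
      by_cases h : ω ∈ s i
      · simp [hfdef, Set.indicator_of_mem h]
      · simp [hfdef, Set.indicator_of_notMem h]
    have hgξint : Integrable (g i * ξ (i + 1)) P := by
      have := integrable_mul₂ (hg2 i) (hL2 (i + 1))
      simpa [Pi.mul_def] using this
    have hggint : Integrable (fun ω => g i ω * g i ω) P := integrable_mul₂ (hg2 i) (hg2 i)
    have hpull : P[g i * ξ (i + 1)|𝒢 i] =ᵐ[P] g i * P[ξ (i + 1)|𝒢 i] :=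
      condExp_mul_of_stronglyMeasurable_left (hgm i) hgξint (hξint i)
    have hA : ∫ ω in s i, ξ (i + 1) ω ^ 2 ∂P = ∫ ω in s i, q i ω ∂P :=
      (setIntegral_condExp (hle i) (hξsq i) (hsmeas i)).symm
    have hB : ∫ ω in s i, g i ω * ξ (i + 1) ω ∂P = ∫ ω in s i, g i ω * g i ω ∂P := by
      have e1 : ∫ ω in s i, g i ω * ξ (i + 1) ω ∂P = ∫ ω in s i, (g i * ξ (i + 1)) ω ∂P := rfl
      rw [e1, ← setIntegral_condExp (hle i) hgξint (hsmeas i)]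
      refine setIntegral_congr_ae hsm ?_
      filter_upwards [hpull] with ω hω _
      rw [hω]
      simp [hgdef, Pi.mul_apply]
    have hexp : ∫ ω in s i, η i ω * η i ω ∂P
        = ∫ ω in s i, ξ (i + 1) ω ^ 2 ∂P - 2 * ∫ ω in s i, g i ω * ξ (i + 1) ω ∂P
          + ∫ ω in s i, g i ω * g i ω ∂P := by
      have hptw : ∀ ω, η i ω * η i ω
          = ξ (i + 1) ω ^ 2 - 2 * (g i ω * ξ (i + 1) ω) + g i ω * g i ω := by
        intro ω; simp only [hηdef, Pi.sub_apply]; ring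
      have i2 : Integrable (fun ω => 2 * (g i ω * ξ (i + 1) ω)) P :=
        (integrable_mul₂ (hg2 i) (hL2 (i + 1))).const_mul 2
      have i1 : Integrable (fun ω => ξ (i + 1) ω ^ 2 - 2 * (g i ω * ξ (i + 1) ω)) P :=
        (hξsq i).sub i2
      rw [show (fun ω => η i ω * η i ω)
          = fun ω => (ξ (i + 1) ω ^ 2 - 2 * (g i ω * ξ (i + 1) ω)) + g i ω * g i ω
          from funext hptw]
      rw [integral_add i1.integrableOn hggint.integrableOn,
        integral_sub (hξsq i).integrableOn i2.integrableOn,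
        integral_const_mul 2 _]
    have hgg_nonneg : 0 ≤ ∫ ω in s i, g i ω * g i ω ∂P :=
      setIntegral_nonneg hsm (fun ω _ => mul_self_nonneg _)
    rw [h1, hexp, integral_indicator hsm]
    rw [hA, hB] at *
    linarith
  -- pointwise bound on the sum of indicators times q
  have hptwise : ∀ᵐ ω ∂P, ∑ i ∈ Finset.range n, (s i).indicator (q i) ω ≤ a := by
    filter_upwards [hq0] with ω hω
    by_cases hT : ∃ i ∈ Finset.range n, ω ∈ s i
    · set T := (Finset.range n).filter (fun i => ω ∈ s i) with hTdef
      have hTne : T.Nonempty := by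
        obtain ⟨i, hi, hsi⟩ := hT
        exact ⟨i, Finset.mem_filter.mpr ⟨hi, hsi⟩⟩
      set k := T.max' hTne with hkdef
      have hk : ω ∈ s k := (Finset.mem_filter.mp (T.max'_mem hTne)).2
      have h1 : ∑ i ∈ Finset.range n, (s i).indicator (q i) ω = ∑ i ∈ T, q i ω := by
        rw [hTdef, Finset.sum_filter]
        exact Finset.sum_congr rfl fun i _ => Set.indicator_apply _ _ _
      have h2 : ∑ i ∈ T, q i ω ≤ ∑ i ∈ Finset.range (k + 1), q i ω := by
        refine Finset.sum_le_sum_of_subset_of_nonneg ?_ (fun i _ _ => hω i)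
        intro i hi
        exact Finset.mem_range.mpr (Nat.lt_succ_of_le (T.le_max' i hi))
      have h3 : ∑ j ∈ Finset.range (k + 1), q j ω ≤ a := hk
      rw [h1]; linarith
    · push_neg at hT
      have : ∀ i ∈ Finset.range n, (s i).indicator (q i) ω = 0 :=
        fun i hi => Set.indicator_of_notMem (hT i hi) _
      rw [Finset.sum_congr rfl this]
      simp
      linarith
  -- second moment of the stopped martingale
  have hM2p : MemLp (fun ω => ∑ i ∈ Finset.range n, f i ω) 2 P :=
    memLp_finsetSum _ (fun i _ => hf2 i)
  have hMint2 : Integrable (fun ω => (∑ i ∈ Finset.range n, f i ω) ^ 2) P := hM2p.integrable_sq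
  have hM2 : ∫ ω, (∑ i ∈ Finset.range n, f i ω) ^ 2 ∂P ≤ a := by
    have hexpand : (fun ω => (∑ i ∈ Finset.range n, f i ω) ^ 2)
        = fun ω => ∑ i ∈ Finset.range n, ∑ j ∈ Finset.range n, f i ω * f j ω := by
      funext ω
      rw [sq, Finset.sum_mul_sum]
    calc ∫ ω, (∑ i ∈ Finset.range n, f i ω) ^ 2 ∂P
        = ∑ i ∈ Finset.range n, ∑ j ∈ Finset.range n, ∫ ω, f i ω * f j ω ∂P := by
          rw [hexpand,
            integral_finset_sum _ (fun i _ => integrable_finset_sum _ (fun j _ => hmulint i j))]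
          exact Finset.sum_congr rfl fun i _ => integral_finset_sum _ fun j _ => hmulint i j
      _ = ∑ i ∈ Finset.range n, ∫ ω, f i ω * f i ω ∂P := by
          refine Finset.sum_congr rfl fun i hi => ?_
          refine Finset.sum_eq_single_of_mem i hi fun j _ hji => ?_
          rcases hji.lt_or_gt with h | h
          · have := horth j i h
            rw [show (fun ω => f i ω * f j ω) = fun ω => f j ω * f i ω from
              funext fun ω => mul_comm _ _]
            exact this
          · exact horth i j h
      _ ≤ ∑ i ∈ Finset.range n, ∫ ω, (s i).indicator (q i) ω ∂P :=
          Finset.sum_le_sum fun i _ => hdiag i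
      _ = ∫ ω, ∑ i ∈ Finset.range n, (s i).indicator (q i) ω ∂P :=
          (integral_finset_sum _ fun i _ => integrable_condExp.indicator (hsmeas0 i)).symm
      _ ≤ ∫ _ω, a ∂P := by
          refine integral_mono_ae
            (integrable_finset_sum _ fun i _ => integrable_condExp.indicator (hsmeas0 i))
            (integrable_const a) hptwise
      _ = a := by simp
  -- Markov / Chebyshev
  have hcheb := mul_meas_ge_le_integral_of_nonneg (μ := P)
    (f := fun ω => (∑ i ∈ Finset.range n, f i ω) ^ 2)
    (ae_of_all _ fun ω => sq_nonneg _) hMint2 (ε ^ 2)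
  have hMle : P {ω | ε ≤ |∑ i ∈ Finset.range n, f i ω|} ≤ ENNReal.ofReal (a / ε ^ 2) := by
    have hsub : {ω | ε ≤ |∑ i ∈ Finset.range n, f i ω|}
        ⊆ {ω | ε ^ 2 ≤ (fun ω => (∑ i ∈ Finset.range n, f i ω) ^ 2) ω} := by
      intro ω hω
      simp only [Set.mem_setOf_eq] at hω ⊢
      calc ε ^ 2 ≤ |∑ i ∈ Finset.range n, f i ω| ^ 2 := by
            exact pow_le_pow_left₀ hε.le hω 2
        _ = (∑ i ∈ Finset.range n, f i ω) ^ 2 := sq_abs _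
    have hp1 : (P {ω | ε ^ 2 ≤ (fun ω => (∑ i ∈ Finset.range n, f i ω) ^ 2) ω}).toReal
        ≤ a / ε ^ 2 := by
      rw [le_div_iff₀ (pow_pos hε 2)]
      calc (P _).toReal * ε ^ 2 = ε ^ 2 * (P _).toReal := mul_comm _ _
        _ ≤ ∫ ω, (∑ i ∈ Finset.range n, f i ω) ^ 2 ∂P := hcheb
        _ ≤ a := hM2
    calc P {ω | ε ≤ |∑ i ∈ Finset.range n, f i ω|}
        ≤ P {ω | ε ^ 2 ≤ (fun ω => (∑ i ∈ Finset.range n, f i ω) ^ 2) ω} := measure_mono hsub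
      _ = ENNReal.ofReal (P {ω | ε ^ 2 ≤ (fun ω => (∑ i ∈ Finset.range n, f i ω) ^ 2) ω}).toReal :=
          (ENNReal.ofReal_toReal (measure_ne_top P _)).symm
      _ ≤ ENNReal.ofReal (a / ε ^ 2) := ENNReal.ofReal_le_ofReal hp1
  -- compare the unstopped and stopped sums
  have hsetle : {ω | ε ≤ |∑ i ∈ Finset.range n, (ξ (i + 1) ω - g i ω)|}
      ≤ᵐ[P] (({ω | ε ≤ |∑ i ∈ Finset.range n, f i ω|}
        ∪ {ω | a < ∑ i ∈ Finset.range n, q i ω} : Set Ω)) := by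
    filter_upwards [hq0] with ω hω
    intro hmem
    by_cases hV : a < ∑ i ∈ Finset.range n, q i ω
    · exact Or.inr hV
    · refine Or.inl ?_
      have hsmem : ∀ i < n, ω ∈ s i := by
        intro i hin
        have hij : ∑ j ∈ Finset.range (i + 1), q j ω ≤ ∑ j ∈ Finset.range n, q j ω :=
          Finset.sum_le_sum_of_subset_of_nonneg (Finset.range_subset_range.mpr hin)
            (fun j _ _ => hω j)
        exact Set.mem_setOf_eq ▸ (hij.trans (not_lt.mp hV))
      have hfeq : ∀ i ∈ Finset.range n, f i ω = ξ (i + 1) ω - g i ω := by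
        intro i hi
        have : f i ω = η i ω := Set.indicator_of_mem (hsmem i (Finset.mem_range.mp hi)) _
        simpa [hηdef] using this
      have hse : ∑ i ∈ Finset.range n, f i ω = ∑ i ∈ Finset.range n, (ξ (i + 1) ω - g i ω) :=
        Finset.sum_congr rfl hfeq
      show ε ≤ |∑ i ∈ Finset.range n, f i ω|
      rw [hse]
      exact hmem
  calc P {ω | ε ≤ |∑ i ∈ Finset.range n, (ξ (i + 1) ω - g i ω)|}
      ≤ P ({ω | ε ≤ |∑ i ∈ Finset.range n, f i ω|}
          ∪ {ω | a < ∑ i ∈ Finset.range n, q i ω}) := measure_mono_ae hsetle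
    _ ≤ P {ω | ε ≤ |∑ i ∈ Finset.range n, f i ω|}
          + P {ω | a < ∑ i ∈ Finset.range n, q i ω} := measure_union_le _ _
    _ ≤ ENNReal.ofReal (a / ε ^ 2) + P {ω | a < ∑ i ∈ Finset.range n, q i ω} :=
        add_le_add hMle le_rfl

end Aux

/-- Lemma 9 of Genon-Catalot & Jacod (1993): for a triangular array `(ξ_{n,i})`
adapted to filtrations `(G_{n,i})`, if both `Σᵢ E(ξ_{n,i}|G_{n,i−1})` and
`Σᵢ E(ξ_{n,i}²|G_{n,i−1})` tend to 0 in probability, then `Σᵢ ξ_{n,i} → 0`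
in probability. -/
theorem stmt_12 {Ω : Type*} [m0 : MeasurableSpace Ω] (P : Measure Ω) [IsProbabilityMeasure P]
    (𝒢 : ℕ → ℕ → MeasurableSpace Ω)
    (hle : ∀ n i, 𝒢 n i ≤ m0) (hmono : ∀ n, Monotone (𝒢 n))
    (ξ : ℕ → ℕ → Ω → ℝ)
    (hadapted : ∀ n i, Measurable[𝒢 n (i + 1)] (ξ n (i + 1)))
    (hL2 : ∀ n i, MemLp (ξ n i) 2 P)
    (h1 : TendstoInMeasure P
      (fun n => ∑ i ∈ Finset.range n, P[ξ n (i + 1)|𝒢 n i]) atTop (fun _ => 0))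
    (h2 : TendstoInMeasure P
      (fun n => ∑ i ∈ Finset.range n, P[fun ω => (ξ n (i + 1) ω) ^ 2|𝒢 n i]) atTop
      (fun _ => 0)) :
    TendstoInMeasure P
      (fun n ω => ∑ i ∈ Finset.range n, ξ n (i + 1) ω) atTop (fun _ => 0) := by
  rw [tendstoInMeasure_iff_dist] at h1 h2 ⊢
  intro ε hε
  -- martingale part tends to 0 in measure
  have hM : Tendsto
      (fun n => P {ω | ε / 2 ≤ |∑ i ∈ Finset.range n, (ξ n (i + 1) ω - (P[ξ n (i + 1)|𝒢 n i]) ω)|})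
      atTop (𝓝 0) := by
    rw [ENNReal.tendsto_nhds_zero]
    intro δ hδ
    rcases eq_or_ne δ ⊤ with rfl | hδt
    · exact Eventually.of_forall fun n => le_top
    have hδ2 : (0 : ℝ≥0∞) < δ / 2 := ENNReal.half_pos hδ.ne'
    have hδ2t : δ / 2 ≠ ⊤ := by
      simp [ENNReal.div_eq_top, hδt]
    have hδ2R : 0 < (δ / 2).toReal := ENNReal.toReal_pos hδ2.ne' hδ2t
    set a : ℝ := (ε / 2) ^ 2 * (δ / 2).toReal with hadef
    have ha : 0 < a := mul_pos (pow_pos (half_pos hε) 2) hδ2R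
    have hofReal : ENNReal.ofReal (a / (ε / 2) ^ 2) = δ / 2 := by
      rw [hadef, mul_div_cancel_left₀ _ (ne_of_gt (by positivity : (0:ℝ) < (ε / 2) ^ 2)),
        ENNReal.ofReal_toReal hδ2t]
    have h2' := h2 a ha
    rw [ENNReal.tendsto_nhds_zero] at h2'
    have hev := h2' (δ / 2) hδ2
    filter_upwards [hev] with n hn
    have hcore := gcj_core (P := P) (𝒢 n) (hle n) (hmono n) (ξ n)
      (fun i => (hadapted n i).stronglyMeasurable) (hL2 n) ha (half_pos hε) n
    have hVle : P {ω | a < ∑ i ∈ Finset.range n, (P[fun ω => ξ n (i + 1) ω ^ 2|𝒢 n i]) ω}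
        ≤ P {ω | a ≤ dist ((∑ i ∈ Finset.range n, P[fun ω => (ξ n (i + 1) ω) ^ 2|𝒢 n i]) ω)
            ((fun _ => (0 : ℝ)) ω)} := by
      refine measure_mono fun ω hω => ?_
      simp only [Set.mem_setOf_eq] at hω ⊢
      rw [Finset.sum_apply]
      have : a ≤ ∑ i ∈ Finset.range n, (P[fun ω => ξ n (i + 1) ω ^ 2|𝒢 n i]) ω := hω.le
      calc a ≤ ∑ i ∈ Finset.range n, (P[fun ω => ξ n (i + 1) ω ^ 2|𝒢 n i]) ω := this
        _ ≤ |∑ i ∈ Finset.range n, (P[fun ω => ξ n (i + 1) ω ^ 2|𝒢 n i]) ω| := le_abs_self _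
        _ = dist (∑ i ∈ Finset.range n, (P[fun ω => ξ n (i + 1) ω ^ 2|𝒢 n i]) ω) 0 := by
            rw [Real.dist_eq, sub_zero]
    calc P {ω | ε / 2 ≤ |∑ i ∈ Finset.range n, (ξ n (i + 1) ω - (P[ξ n (i + 1)|𝒢 n i]) ω)|}
        ≤ ENNReal.ofReal (a / (ε / 2) ^ 2)
          + P {ω | a < ∑ i ∈ Finset.range n, (P[fun ω => ξ n (i + 1) ω ^ 2|𝒢 n i]) ω} := hcore
      _ ≤ δ / 2 + δ / 2 := by
          rw [hofReal]
          exact add_le_add le_rfl (hVle.trans hn)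
      _ = δ := ENNReal.add_halves δ
  -- predictable part tends to 0 in measure
  have hA := h1 (ε / 2) (half_pos hε)
  -- combine
  have hbound : ∀ n,
      P {ω | ε ≤ dist ((fun ω => ∑ i ∈ Finset.range n, ξ n (i + 1) ω) ω) ((fun _ => (0:ℝ)) ω)}
        ≤ P {ω | ε / 2 ≤ dist ((∑ i ∈ Finset.range n, P[ξ n (i + 1)|𝒢 n i]) ω) ((fun _ => (0:ℝ)) ω)}
          + P {ω | ε / 2 ≤ |∑ i ∈ Finset.range n, (ξ n (i + 1) ω - (P[ξ n (i + 1)|𝒢 n i]) ω)|} := by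
    intro n
    refine le_trans (measure_mono ?_) (measure_union_le _ _)
    intro ω hω
    simp only [Set.mem_setOf_eq, Real.dist_eq, sub_zero, Set.mem_union, Finset.sum_apply] at hω ⊢
    by_contra hcon
    push_neg at hcon
    obtain ⟨hA', hM'⟩ := hcon
    have hdecomp : ∑ i ∈ Finset.range n, ξ n (i + 1) ω
        = (∑ i ∈ Finset.range n, (P[ξ n (i + 1)|𝒢 n i]) ω)
          + ∑ i ∈ Finset.range n, (ξ n (i + 1) ω - (P[ξ n (i + 1)|𝒢 n i]) ω) := by
      rw [← Finset.sum_add_distrib]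
      exact Finset.sum_congr rfl fun i _ => by ring
    rw [hdecomp] at hω
    have := abs_add_le (∑ i ∈ Finset.range n, (P[ξ n (i + 1)|𝒢 n i]) ω)
      (∑ i ∈ Finset.range n, (ξ n (i + 1) ω - (P[ξ n (i + 1)|𝒢 n i]) ω))
    linarith
  have hsum : Tendsto (fun n =>
      P {ω | ε / 2 ≤ dist ((∑ i ∈ Finset.range n, P[ξ n (i + 1)|𝒢 n i]) ω) ((fun _ => (0:ℝ)) ω)}
      + P {ω | ε / 2 ≤ |∑ i ∈ Finset.range n, (ξ n (i + 1) ω - (P[ξ n (i + 1)|𝒢 n i]) ω)|})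
      atTop (𝓝 0) := by
    have := hA.add hM
    simpa using this
  exact tendsto_of_tendsto_of_tendsto_of_le_of_le tendsto_const_nhds hsum
    (fun n => zero_le) hbound
end

section
/- Consider the 2×2 symmetric matrix Σ(Δ) = σ² [[Δ³/3, Δ²/2 − Δ³γ/3],[Δ²/2 − Δ³γ/3, Δ − Δ²γ + Δ³γ²/3]] (the variance matrix of the order-1.5 scheme for the harmonic oscillator). For every γ ∈ ℝ, σ > 0, and all sufficiently small Δ > 0, Σ(Δ) is positive definite; in particular det Σ(Δ) = σ⁴(Δ⁴/12 + O(Δ⁵)) > 0 for small Δ. -/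
open Matrix

lemma posdef_fin2 (a b c : ℝ) (ha : 0 < a) (hd : 0 < a * c - b * b) :
    (!![a, b; b, c] : Matrix (Fin 2) (Fin 2) ℝ).PosDef := by
  rw [Matrix.posDef_iff_dotProduct_mulVec]
  constructor
  · unfold Matrix.IsHermitian
    ext i j
    fin_cases i <;> fin_cases j <;> simp [Matrix.conjTranspose, Matrix.transpose]
  · intro x hx
    have hq : star x ⬝ᵥ (!![a, b; b, c]).mulVec x
        = a * x 0 ^ 2 + 2 * b * (x 0 * x 1) + c * x 1 ^ 2 := by
      simp [Matrix.mulVec, dotProduct, Fin.sum_univ_two]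
      ring
    rw [hq]
    rcases eq_or_ne (x 1) 0 with h1 | h1
    · have h0 : x 0 ≠ 0 := by
        intro h0; apply hx; ext i; fin_cases i <;> simp [h0, h1]
      rw [h1]
      nlinarith [mul_pos ha (pow_pos (abs_pos.mpr h0) 2), sq_abs (x 0)]
    · nlinarith [sq_nonneg (a * x 0 + b * x 1), pow_pos (abs_pos.mpr h1) 2, sq_abs (x 1), sq_nonneg (x 0)]

/-- The variance matrix of the order-1.5 scheme for the harmonic oscillator,
`Σ(Δ) = σ²[[Δ³/3, Δ²/2 − Δ³γ/3],[Δ²/2 − Δ³γ/3, Δ − Δ²γ + Δ³γ²/3]]`, is positive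
definite for all sufficiently small `Δ > 0`, with
`det Σ(Δ) = σ⁴(Δ⁴/12 + O(Δ⁵)) > 0`. -/
theorem stmt_15 (γ σ : ℝ) (hσ : 0 < σ)
    (S : ℝ → Matrix (Fin 2) (Fin 2) ℝ)
    (hS : ∀ Δ : ℝ, S Δ = σ ^ 2 •
      !![Δ ^ 3 / 3, Δ ^ 2 / 2 - Δ ^ 3 * γ / 3;
        Δ ^ 2 / 2 - Δ ^ 3 * γ / 3, Δ - Δ ^ 2 * γ + Δ ^ 3 * γ ^ 2 / 3]) :
    ∃ δ > 0, ∃ c > 0, ∀ Δ : ℝ, 0 < Δ → Δ < δ →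
      (S Δ).PosDef ∧ 0 < (S Δ).det ∧
      |(S Δ).det - σ ^ 4 * (Δ ^ 4 / 12)| ≤ σ ^ 4 * c * Δ ^ 5 := by
  refine ⟨1, one_pos, 1, one_pos, fun Δ hΔ hΔ1 => ?_⟩
  have hσ2 : 0 < σ ^ 2 := by positivity
  have hdet : (S Δ).det = σ ^ 4 * (Δ ^ 4 / 12) := by
    rw [hS Δ, Matrix.det_smul, Matrix.det_fin_two_of]
    simp only [Fintype.card_fin]
    ring
  have hSeq : S Δ = !![σ ^ 2 * (Δ ^ 3 / 3), σ ^ 2 * (Δ ^ 2 / 2 - Δ ^ 3 * γ / 3);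
      σ ^ 2 * (Δ ^ 2 / 2 - Δ ^ 3 * γ / 3), σ ^ 2 * (Δ - Δ ^ 2 * γ + Δ ^ 3 * γ ^ 2 / 3)] := by
    rw [hS Δ]
    ext i j
    fin_cases i <;> fin_cases j <;> simp
  refine ⟨?_, ?_, ?_⟩
  · rw [hSeq]
    apply posdef_fin2
    · positivity
    · have : σ ^ 2 * (Δ ^ 3 / 3) * (σ ^ 2 * (Δ - Δ ^ 2 * γ + Δ ^ 3 * γ ^ 2 / 3))
          - σ ^ 2 * (Δ ^ 2 / 2 - Δ ^ 3 * γ / 3) * (σ ^ 2 * (Δ ^ 2 / 2 - Δ ^ 3 * γ / 3))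
          = σ ^ 4 * Δ ^ 4 / 12 := by ring
      rw [this]
      positivity
  · rw [hdet]; positivity
  · rw [hdet]
    simp only [sub_self, abs_zero]
    positivity
end
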